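/- Let C* = Λ − Ū(a*) ≥ 0. The coverage-based bound exp(−(1/e)Λ − (1 − 1/e)Ū(a*)) strictly exceeds the approximate-objective bound (1 − 1/e)·exp(−Ū(a*)) if and only if C* < −e·ln(1 − 1/e). -/

import Mathlib

theorem stmt_6 (Λ Us : ℝ) (hΛ : 0 ≤ Λ) (hUs : Us ∈ Set.Icc 0 Λ) :
    Real.exp (-(1 / Real.exp 1) * Λ - (1 - 1 / Real.exp 1) * Us)
        > (1 - 1 / Real.exp 1) * Real.exp (-Us)
      ↔ Λ - Us < -Real.exp 1 * Real.log (1 - 1 / Real.exp 1) := by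
  have he : (1:ℝ) < Real.exp 1 := by
    have := Real.exp_one_gt_d9; linarith
  have hepos : (0:ℝ) < Real.exp 1 := by positivity
  have h1 : (0:ℝ) < 1 - 1 / Real.exp 1 := by
    have : 1 / Real.exp 1 < 1 := by
      rw [div_lt_one hepos]; exact he
    linarith
  have hsplit : Real.exp (-(1 / Real.exp 1) * Λ - (1 - 1 / Real.exp 1) * Us)
      = Real.exp (-(1 / Real.exp 1) * (Λ - Us)) * Real.exp (-Us) := by
    rw [← Real.exp_add]; ring_nf
  rw [hsplit, gt_iff_lt, mul_lt_mul_iff_left₀ (Real.exp_pos _),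
    ← Real.log_lt_iff_lt_exp h1]
  rw [show -(1 / Real.exp 1) * (Λ - Us) = -(Λ - Us) / Real.exp 1 by
      field_simp, lt_div_iff₀ hepos]
  constructor <;> intro h <;> nlinarith [h]
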